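/- There exists a function f : ℕ → ℕ such that the following holds. Let G be a finite nonabelian simple group admitting an automorphism α of order e > 1 with gcd(e, |G|) = 1, and let r be a positive integer such that |[P,α]| ≤ r for every prime p and every Sylow p-subgroup P of G with α(P) = P. Then |G| ≤ f(r). -/

import Mathlib

open MulAction Pointwise

/-- Fixed-point subgroup of an automorphism. -/
def fixedSub {M : Type*} [Group M] (φ : MulAut M) : Subgroup M where
  carrier := {g | φ g = g}
  one_mem' := map_one φ
  mul_mem' := by intro a b ha hb; simp only [Set.mem_setOf_eq, map_mul] at *; rw [ha, hb]
  inv_mem' := by intro a ha; simp only [Set.mem_setOf_eq, map_inv] at *; rw [ha]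

@[simp] lemma mem_fixedSub {M : Type*} [Group M] {φ : MulAut M} {g : M} :
    g ∈ fixedSub φ ↔ φ g = g := Iff.rfl

lemma smul_fixed_of_coprime {K : Type*} {Y : Type*} [Group K] [MulAction K Y]
    {k : K} {y : Y} {n m : ℕ} (hn : k ^ n • y = y) (hm : k ^ m • y = y)
    (h : Nat.gcd n m = 1) : k • y = y := by
  have hn' : k ^ n ∈ MulAction.stabilizer K y := hn
  have hm' : k ^ m ∈ MulAction.stabilizer K y := hm
  have key : k = (k ^ n) ^ (Nat.gcdA n m) * (k ^ m) ^ (Nat.gcdB n m) := by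
    have : (k ^ n : K) ^ Nat.gcdA n m * (k ^ m) ^ Nat.gcdB n m
        = k ^ ((n : ℤ) * Nat.gcdA n m + (m : ℤ) * Nat.gcdB n m) := by
      rw [zpow_add, ← zpow_natCast k n, ← zpow_natCast k m, ← zpow_mul, ← zpow_mul]
    rw [this, ← Nat.gcd_eq_gcd_ab, h]
    simp
  have : k ∈ MulAction.stabilizer K y := by
    rw [key]
    exact mul_mem (Subgroup.zpow_mem _ hn' _) (Subgroup.zpow_mem _ hm' _)
  exact this

lemma smul_pow_fixed {K : Type*} {Y : Type*} [Group K] [MulAction K Y]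
    {k : K} {y : Y} (h : k • y = y) (n : ℕ) : k ^ n • y = y :=
  Subgroup.pow_mem (MulAction.stabilizer K y) h n

/-- A permutation of prime-power order on a finite set of coprime cardinality has a
fixed point. -/
lemma exists_fixed_perm {X : Type*} [Finite X] {q a : ℕ} (hq : q.Prime)
    (σ : Equiv.Perm X) (h : σ ^ (q ^ a) = 1) (hX : ¬ q ∣ Nat.card X) :
    ∃ x, σ x = x := by
  have hcard : Nat.card X ≠ 0 := fun h0 => hX (h0 ▸ dvd_zero q)
  have hne : Nonempty X := (Nat.card_ne_zero.mp hcard).1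
  haveI : Fact q.Prime := ⟨hq⟩
  set H := Subgroup.zpowers σ with hH
  have hpH : IsPGroup q H := by
    rintro ⟨g, hg⟩
    obtain ⟨z, hz⟩ := Subgroup.mem_zpowers_iff.mp hg
    refine ⟨a, Subtype.ext ?_⟩
    have : (g : Equiv.Perm X) ^ q ^ a = 1 := by
      rw [← hz, ← zpow_natCast, ← zpow_mul, mul_comm, zpow_mul, zpow_natCast, h, one_zpow]
    simpa using this
  obtain ⟨x, hx⟩ := hpH.nonempty_fixed_point_of_prime_not_dvd_card X hX
  refine ⟨x, ?_⟩
  have := hx ⟨σ, Subgroup.mem_zpowers σ⟩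
  simpa using this

/-- Glauberman-type lemma for a cyclic coprime "action" given by a compatible pair. -/
theorem glauberman_cyclic {M : Type*} [Group M] [Finite M] {Ω : Type*} [Finite Ω]
    [MulAction M Ω] [MulAction.IsPretransitive M Ω] [Nonempty Ω] :
    ∀ (e : ℕ), 0 < e → ∀ (φ : MulAut M) (σ : Equiv.Perm Ω),
      (∀ g ω, σ (g • ω) = φ g • σ ω) → φ ^ e = 1 → σ ^ e = 1 →
      Nat.Coprime e (Nat.card M) →
      (∃ ω, σ ω = ω) ∧ (∀ ω ω', σ ω = ω → σ ω' = ω' → ∃ g, φ g = g ∧ g • ω = ω') := by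
  intro e
  induction e using Nat.strong_induction_on with
  | _ e IH =>
  intro he φ σ hcompat hφ hσ hcop
  -- powers are compatible
  have compat_pow : ∀ (k : ℕ) (g : M) (ω : Ω), (σ ^ k) (g • ω) = (φ ^ k) g • (σ ^ k) ω := by
    intro k
    induction k with
    | zero => intro g ω; simp
    | succ k ih =>
      intro g ω
      rw [pow_succ' σ k, pow_succ' φ k]
      simp only [Equiv.Perm.mul_apply, MulAut.mul_apply]
      rw [ih g ω]
      exact hcompat _ _
  rcases eq_or_lt_of_le (Nat.one_le_iff_ne_zero.mpr he.ne') with h1 | h1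
  · -- e = 1
    have hφ1 : φ = 1 := by rwa [← h1, pow_one] at hφ
    have hσ1 : σ = 1 := by rwa [← h1, pow_one] at hσ
    subst hφ1; subst hσ1
    refine ⟨⟨Classical.arbitrary Ω, rfl⟩, ?_⟩
    intro ω ω' _ _
    obtain ⟨g, hg⟩ := MulAction.exists_smul_eq M ω ω'
    exact ⟨g, rfl, hg⟩
  · -- 1 < e
    have hene : e ≠ 0 := he.ne'
    set q := e.minFac with hqdef
    have hq : q.Prime := Nat.minFac_prime (by omega)
    have hqdvd : q ∣ e := Nat.minFac_dvd e
    set a := e.factorization q with hadef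
    set m := e / q ^ a with hmdef
    have hem : q ^ a * m = e := Nat.ordProj_mul_ordCompl_eq_self e q
    have hmpos : 0 < m := Nat.ordCompl_pos q hene
    have hqnm : ¬ q ∣ m := Nat.not_dvd_ordCompl hq hene
    have hapos : 0 < a := hq.factorization_pos_of_dvd hene hqdvd
    have hqa1 : 1 < q ^ a := Nat.one_lt_pow hapos.ne' hq.one_lt
    have hmlt : m < e := by
      rw [← hem]
      calc m = 1 * m := (one_mul m).symm
      _ < q ^ a * m := (Nat.mul_lt_mul_right hmpos).mpr hqa1
    have hmdvd : m ∣ e := ⟨q ^ a, by rw [← hem, mul_comm]⟩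
    have hqM : ¬ q ∣ Nat.card M := by
      intro hd
      have hg : q ∣ Nat.gcd e (Nat.card M) := Nat.dvd_gcd hqdvd hd
      rw [Nat.Coprime] at hcop
      rw [hcop] at hg
      exact hq.ne_one (Nat.dvd_one.mp hg)
    obtain ⟨⟨ω₀, hω₀⟩, htrans⟩ :=
      IH m hmlt hmpos (φ ^ (q ^ a)) (σ ^ (q ^ a)) (compat_pow (q ^ a))
        (by rw [← pow_mul, hem, hφ]) (by rw [← pow_mul, hem, hσ])
        (Nat.Coprime.coprime_dvd_left hmdvd hcop)
    -- the fixed subgroup of φ^(q^a)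
    set Cs : Subgroup M := fixedSub (φ ^ (q ^ a)) with hCs
    set Xs : Set Ω := {ω | (σ ^ (q ^ a)) ω = ω} with hXs
    have hω₀X : ω₀ ∈ Xs := hω₀
    have hXorbit : Xs = MulAction.orbit Cs ω₀ := by
      ext ω
      constructor
      · intro hω
        obtain ⟨g, hg, hgω⟩ := htrans ω₀ ω hω₀ hω
        exact ⟨⟨g, hg⟩, hgω⟩
      · rintro ⟨⟨g, hg⟩, rfl⟩
        show (σ ^ (q ^ a)) (g • ω₀) = g • ω₀
        rw [compat_pow (q ^ a) g ω₀, hω₀]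
        rw [show (φ ^ (q ^ a)) g = g from hg]
    have hXcard : Nat.card Xs ∣ Nat.card M := by
      rw [hXorbit]
      have h1 : Nat.card (MulAction.orbit Cs ω₀) ∣ Nat.card Cs := by
        rw [Nat.card_congr (MulAction.orbitEquivQuotientStabilizer Cs ω₀)]
        exact Subgroup.index_dvd_card (MulAction.stabilizer Cs ω₀)
      exact h1.trans (Subgroup.card_subgroup_dvd_card Cs)
    have hqX : ¬ q ∣ Nat.card Xs := fun hd => hqM (hd.trans hXcard)
    -- the permutation induced by σ^m on Xs
    have hcomm : ∀ x : Ω, x ∈ Xs → (σ ^ m) x ∈ Xs := by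
      intro x hx
      show (σ ^ (q ^ a)) ((σ ^ m) x) = (σ ^ m) x
      have : σ ^ (q ^ a) * σ ^ m = σ ^ m * σ ^ (q ^ a) := by
        rw [← pow_add, ← pow_add, add_comm]
      calc (σ ^ (q ^ a)) ((σ ^ m) x) = (σ ^ (q ^ a) * σ ^ m) x := rfl
        _ = (σ ^ m * σ ^ (q ^ a)) x := by rw [this]
        _ = (σ ^ m) x := by rw [Equiv.Perm.mul_apply, hx]
    have hcomm' : ∀ x : Ω, x ∈ Xs → (σ ^ m)⁻¹ x ∈ Xs := by
      intro x hx
      show (σ ^ (q ^ a)) ((σ ^ m)⁻¹ x) = (σ ^ m)⁻¹ x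
      apply (σ ^ m).injective
      have e1 : (σ ^ m) ((σ ^ (q ^ a)) ((σ ^ m)⁻¹ x)) = (σ ^ (q ^ a)) x := by
        calc (σ ^ m) ((σ ^ (q ^ a)) ((σ ^ m)⁻¹ x))
            = (σ ^ m * σ ^ (q ^ a) * (σ ^ m)⁻¹) x := rfl
          _ = (σ ^ (q ^ a) * σ ^ m * (σ ^ m)⁻¹) x := by
              rw [show σ ^ m * σ ^ (q ^ a) = σ ^ (q ^ a) * σ ^ m by
                rw [← pow_add, ← pow_add, add_comm]]
          _ = (σ ^ (q ^ a)) x := by rw [mul_inv_cancel_right]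
      rw [e1, hx]
      exact ((σ ^ m).apply_symm_apply x).symm
    set τ : Equiv.Perm Xs :=
      { toFun := fun x => ⟨(σ ^ m) x, hcomm x x.2⟩
        invFun := fun x => ⟨(σ ^ m)⁻¹ x, hcomm' x x.2⟩
        left_inv := fun x => Subtype.ext (by simp)
        right_inv := fun x => Subtype.ext (by simp) } with hτ
    have hτcoe : ∀ (k : ℕ) (x : Xs), ((τ ^ k) x : Ω) = ((σ ^ m) ^ k) x := by
      intro k
      induction k with
      | zero => intro x; simp
      | succ k ih =>
        intro x
        rw [pow_succ' τ k, pow_succ' (σ ^ m) k]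
        simp only [Equiv.Perm.mul_apply]
        rw [← ih x]
        rfl
    have hτpow : τ ^ (q ^ a) = 1 := by
      ext x
      have := hτcoe (q ^ a) x
      rw [← pow_mul, mul_comm m (q ^ a), hem, hσ] at this
      simp only [Equiv.Perm.coe_one, id_eq] at this ⊢
      exact this
    have : Nonempty Xs := ⟨⟨ω₀, hω₀X⟩⟩
    obtain ⟨xst, hxst⟩ := exists_fixed_perm hq τ hτpow hqX
    have h2 : (σ ^ m) (xst : Ω) = (xst : Ω) := congrArg Subtype.val hxst
    have h1 : (σ ^ (q ^ a)) (xst : Ω) = (xst : Ω) := xst.2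
    have hgcd : Nat.gcd (q ^ a) m = 1 :=
      Nat.Coprime.pow_left a ((Nat.Prime.coprime_iff_not_dvd hq).mpr hqnm)
    have hfix : σ (xst : Ω) = (xst : Ω) :=
      smul_fixed_of_coprime (k := σ) (y := (xst : Ω)) h1 h2 hgcd
    refine ⟨⟨xst, hfix⟩, ?_⟩
    -- transitivity
    intro ω ω' hω hω'
    have hωq : (σ ^ (q ^ a)) ω = ω := smul_pow_fixed (k := σ) hω (q ^ a)
    have hω'q : (σ ^ (q ^ a)) ω' = ω' := smul_pow_fixed (k := σ) hω' (q ^ a)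
    have hωm : (σ ^ m) ω = ω := smul_pow_fixed (k := σ) hω m
    have hω'm : (σ ^ m) ω' = ω' := smul_pow_fixed (k := σ) hω' m
    obtain ⟨g₀, hg₀f, hg₀⟩ := htrans ω ω' hωq hω'q
    set Ts : Set M := {g | (φ ^ (q ^ a)) g = g ∧ g • ω = ω'} with hTs
    have hg₀T : g₀ ∈ Ts := ⟨hg₀f, hg₀⟩
    -- |Ts| = |Cs ⊓ stab ω| divides |M|
    set S₀ : Subgroup M := Cs ⊓ MulAction.stabilizer M ω with hS₀
    have eT : Ts ≃ S₀ :=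
      { toFun := fun t => ⟨g₀⁻¹ * t, by
          constructor
          · show (φ ^ (q ^ a)) (g₀⁻¹ * (t : M)) = g₀⁻¹ * (t : M)
            rw [map_mul, map_inv, hg₀f, t.2.1]
          · show (g₀⁻¹ * (t : M)) • ω = ω
            rw [mul_smul, t.2.2, inv_smul_eq_iff, hg₀]⟩
        invFun := fun s => ⟨g₀ * s, by
          constructor
          · show (φ ^ (q ^ a)) (g₀ * (s : M)) = g₀ * (s : M)
            rw [map_mul, hg₀f, show (φ ^ (q ^ a)) (s : M) = (s : M) from s.2.1]
          · show (g₀ * (s : M)) • ω = ω'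
            rw [mul_smul, show (s : M) • ω = ω from s.2.2, hg₀]⟩
        left_inv := fun t => Subtype.ext (by simp)
        right_inv := fun s => Subtype.ext (by simp) }
    have hTcard : Nat.card Ts ∣ Nat.card M := by
      rw [Nat.card_congr eT]
      exact Subgroup.card_subgroup_dvd_card S₀
    have hqT : ¬ q ∣ Nat.card Ts := fun hd => hqM (hd.trans hTcard)
    -- permutation of Ts induced by φ^m
    have hmemT : ∀ g : M, g ∈ Ts → (φ ^ m) g ∈ Ts := by
      intro g hg
      constructor
      · show (φ ^ (q ^ a)) ((φ ^ m) g) = (φ ^ m) g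
        calc (φ ^ (q ^ a)) ((φ ^ m) g) = (φ ^ (q ^ a) * φ ^ m) g := rfl
          _ = (φ ^ m * φ ^ (q ^ a)) g := by rw [← pow_add, ← pow_add, add_comm]
          _ = (φ ^ m) g := by rw [MulAut.mul_apply, hg.1]
      · have := compat_pow m g ω
        rw [hg.2, hωm, hω'm] at this
        exact this.symm
    have hmemT' : ∀ g : M, g ∈ Ts → (φ ^ m)⁻¹ g ∈ Ts := by
      intro g hg
      constructor
      · show (φ ^ (q ^ a)) ((φ ^ m)⁻¹ g) = (φ ^ m)⁻¹ g
        apply (φ ^ m).injective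
        calc (φ ^ m) ((φ ^ (q ^ a)) ((φ ^ m)⁻¹ g))
            = (φ ^ m * φ ^ (q ^ a) * (φ ^ m)⁻¹) g := rfl
          _ = (φ ^ (q ^ a) * φ ^ m * (φ ^ m)⁻¹) g := by
              rw [show φ ^ m * φ ^ (q ^ a) = φ ^ (q ^ a) * φ ^ m by
                rw [← pow_add, ← pow_add, add_comm]]
          _ = (φ ^ (q ^ a)) g := by rw [mul_inv_cancel_right]
          _ = g := hg.1
          _ = (φ ^ m) ((φ ^ m)⁻¹ g) := by
              rw [show ((φ ^ m) ((φ ^ m)⁻¹ g)) = ((φ ^ m) * (φ ^ m)⁻¹) g from rfl]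
              rw [mul_inv_cancel, MulAut.one_apply]
      · have hx : (φ ^ m) ((φ ^ m)⁻¹ g) = g := by
          rw [show ((φ ^ m) ((φ ^ m)⁻¹ g)) = ((φ ^ m) * (φ ^ m)⁻¹) g from rfl]
          rw [mul_inv_cancel, MulAut.one_apply]
        have := compat_pow m ((φ ^ m)⁻¹ g) ω
        rw [hωm, hx] at this
        -- this : (σ ^ m) (((φ^m)⁻¹ g) • ω) = g • ω
        have h3 : (σ ^ m) (((φ ^ m)⁻¹ g) • ω) = ω' := by rw [this, hg.2]
        apply (σ ^ m).injective
        rw [h3, hω'm]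
    set ψ : Equiv.Perm Ts :=
      { toFun := fun t => ⟨(φ ^ m) t, hmemT t t.2⟩
        invFun := fun t => ⟨(φ ^ m)⁻¹ t, hmemT' t t.2⟩
        left_inv := fun t => Subtype.ext (by simp)
        right_inv := fun t => Subtype.ext (by simp) } with hψ
    have hψcoe : ∀ (k : ℕ) (t : Ts), ((ψ ^ k) t : M) = ((φ ^ m) ^ k) t := by
      intro k
      induction k with
      | zero => intro t; simp
      | succ k ih =>
        intro t
        rw [pow_succ' ψ k, pow_succ' (φ ^ m) k]
        simp only [Equiv.Perm.mul_apply, MulAut.mul_apply]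
        rw [← ih t]
        rfl
    have hψpow : ψ ^ (q ^ a) = 1 := by
      ext t
      have := hψcoe (q ^ a) t
      rw [← pow_mul, mul_comm m (q ^ a), hem, hφ] at this
      simp only [Equiv.Perm.coe_one, id_eq] at this ⊢
      exact this
    have : Nonempty Ts := ⟨⟨g₀, hg₀T⟩⟩
    obtain ⟨tst, htst⟩ := exists_fixed_perm hq ψ hψpow hqT
    have h2 : (φ ^ m) (tst : M) = (tst : M) := congrArg Subtype.val htst
    have h1 : (φ ^ (q ^ a)) (tst : M) = (tst : M) := tst.2.1
    have hgcd : Nat.gcd (q ^ a) m = 1 :=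
      Nat.Coprime.pow_left a ((Nat.Prime.coprime_iff_not_dvd hq).mpr hqnm)
    have hfixg : φ (tst : M) = (tst : M) :=
      smul_fixed_of_coprime (k := φ) (y := (tst : M)) h1 h2 hgcd
    exact ⟨(tst : M), hfixg, tst.2.2⟩

theorem simple_order_bounded_of_sylow_commutators_bounded :
    ∃ f : ℕ → ℕ,
      ∀ (G : Type*) [Group G] [Finite G] [IsSimpleGroup G],
        (∃ a b : G, a * b ≠ b * a) →
        ∀ (α : MulAut G) (e r : ℕ),
          orderOf α = e → 1 < e → Nat.Coprime e (Nat.card G) → 0 < r →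
          (∀ (p : ℕ) [Fact p.Prime] (P : Sylow p G),
            Subgroup.map α.toMonoidHom (P : Subgroup G) = P →
            Nat.card (Subgroup.closure {x : G | ∃ g ∈ (P : Subgroup G), x = g⁻¹ * α g}) ≤ r) →
          Nat.card G ≤ f r := by
  refine ⟨fun r => (r ^ r).factorial, ?_⟩
  intro G _ _ _ _ α e r horder he1 hcop hr hyp
  have hepos : 0 < e := lt_trans one_pos he1
  have hφe : α ^ e = 1 := by rw [← horder]; exact pow_orderOf_eq_one α
  set C : Subgroup G := fixedSub α with hC
  have hCne : C ≠ ⊤ := by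
    intro hCtop
    have hα1 : α = 1 := by
      ext g
      exact (hCtop ▸ Subgroup.mem_top g : g ∈ C)
    rw [hα1, orderOf_one] at horder
    omega
  have hc0 : Nat.card ↥C ≠ 0 := Nat.card_pos.ne'
  have hi0 : C.index ≠ 0 := Subgroup.index_ne_zero_of_finite
  have hn0 : Nat.card G ≠ 0 := Nat.card_pos.ne'
  -- Key: each prime-power factor of the index of C is at most r
  have key : ∀ p : ℕ, p.Prime → p ^ ((C.index).factorization p) ≤ r := by
    intro p hp
    haveI : Fact p.Prime := ⟨hp⟩
    haveI hfinSyl : Finite (Sylow p G) :=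
      Finite.of_injective (fun P : Sylow p G => (P : Subgroup G))
        (fun P Q h => Sylow.ext h)
    -- the permutation of the Sylow p-subgroups induced by α
    set σp : Equiv.Perm (Sylow p G) := MulAction.toPermHom (MulAut G) (Sylow p G) α
      with hσp
    have hcompat : ∀ (g : G) (P : Sylow p G), σp (g • P) = α g • σp P := by
      intro g P
      show α • (g • P) = α g • (α • P)
      rw [Sylow.smul_def, Sylow.smul_def (g := α g)]
      rw [← mul_smul, ← mul_smul]
      congr 1
      ext x
      simp [MulAut.conj]
    have hσe : σp ^ e = 1 := by rw [← map_pow, hφe, map_one]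
    obtain ⟨⟨P, hP⟩, -⟩ := glauberman_cyclic e hepos α σp hcompat hφe hσe hcop
    have hPmap : Subgroup.map α.toMonoidHom (P : Subgroup G) = P := by
      have h1 : (α • P : Sylow p G) = P := hP
      have h2 : ((α • P : Sylow p G) : Subgroup G) = α • (P : Subgroup G) := rfl
      have h3 : α • (P : Subgroup G) = Subgroup.map α.toMonoidHom (P : Subgroup G) := by
        rw [Subgroup.pointwise_smul_def]
        congr 1
      rw [← h3, ← h2, h1]
    have hbound := hyp p P hPmap
    -- quotient of P by fixed points injects into the commutator closure
    set Pe : Subgroup G := (P : Subgroup G) with hPe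
    set S : Set G := {x : G | ∃ g ∈ (P : Subgroup G), x = g⁻¹ * α g} with hS
    set K : Subgroup ↥Pe := C.subgroupOf Pe with hK
    have memS : ∀ g : ↥Pe, α (g : G) * (g : G)⁻¹ ∈ Subgroup.closure S := by
      intro g
      have hmem : ((g : G)⁻¹)⁻¹ * α ((g : G)⁻¹) ∈ S :=
        ⟨(g : G)⁻¹, Pe.inv_mem g.2, rfl⟩
      have h1 := Subgroup.subset_closure hmem
      have h2 := inv_mem h1
      simpa [map_inv, mul_inv_rev] using h2
    set fq : ↥Pe → ↥(Subgroup.closure S) := fun g => ⟨α (g : G) * (g : G)⁻¹, memS g⟩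
      with hfq
    have hsound : ∀ a b : ↥Pe, (a : G)⁻¹ * b ∈ C → fq a = fq b := by
      intro a b hab
      have hE : (α (a : G))⁻¹ * α (b : G) = (a : G)⁻¹ * (b : G) := by
        have := (mem_fixedSub).mp hab
        simpa [map_mul, map_inv] using this
      apply Subtype.ext
      show α (a : G) * (a : G)⁻¹ = α (b : G) * (b : G)⁻¹
      have hb : α (b : G) = α (a : G) * ((a : G)⁻¹ * (b : G)) := by
        rw [← hE, ← mul_assoc, mul_inv_cancel, one_mul]
      rw [hb]
      group
    set F : (↥Pe ⧸ K) → ↥(Subgroup.closure S) :=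
      fun x => Quotient.liftOn' x fq (by
        intro a b hab
        exact hsound a b (Subgroup.mem_subgroupOf.mp (QuotientGroup.leftRel_apply.mp hab)))
      with hF
    have hFinj : Function.Injective F := by
      intro x y
      refine Quotient.inductionOn₂' x y ?_
      intro a b h
      have h' : α (a : G) * (a : G)⁻¹ = α (b : G) * (b : G)⁻¹ := congrArg Subtype.val h
      apply Quotient.sound'
      rw [QuotientGroup.leftRel_apply]
      rw [Subgroup.mem_subgroupOf]
      show α ((a⁻¹ * b : ↥Pe) : G) = ((a⁻¹ * b : ↥Pe) : G)
      push_cast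
      rw [map_mul, map_inv]
      have : α (b : G) = α (a : G) * (a : G)⁻¹ * (b : G) * (b : G)⁻¹ * (b:G) := by
        rw [h']; group
      rw [this]; group
    have hQle : Nat.card (↥Pe ⧸ K) ≤ r := by
      refine le_trans (Nat.card_le_card_of_injective F hFinj) ?_
      exact hbound
    -- cardinality bookkeeping
    obtain ⟨k, hk⟩ := IsPGroup.iff_card.mp ((P.2).to_subgroup K)
    have hPcard : Nat.card ↥Pe = p ^ ((Nat.card G).factorization p) :=
      P.card_eq_multiplicity
    have hsplit : Nat.card ↥Pe = Nat.card (↥Pe ⧸ K) * Nat.card ↥K :=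
      Subgroup.card_eq_card_quotient_mul_card_subgroup K
    have hKdvdC : Nat.card ↥K ∣ Nat.card ↥C := by
      let j : ↥K →* ↥C :=
        { toFun := fun x => ⟨((x : ↥Pe) : G), Subgroup.mem_subgroupOf.mp x.2⟩
          map_one' := rfl
          map_mul' := fun _ _ => rfl }
      have hjinj : Function.Injective j := by
        intro x y hxy
        have h2 := congrArg Subtype.val hxy
        have h3 : ((x : ↥Pe) : G) = ((y : ↥Pe) : G) := h2
        exact Subtype.ext (Subtype.ext h3)
      exact Subgroup.card_dvd_of_injective j hjinj
    set np := (Nat.card G).factorization p with hnp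
    have hkc : k ≤ (Nat.card ↥C).factorization p := by
      rw [← Nat.Prime.pow_dvd_iff_le_factorization hp hc0, ← hk]
      exact hKdvdC
    have hkn : k ≤ np := by
      rw [← Nat.pow_dvd_pow_iff_le_right hp.one_lt, ← hk, ← hPcard]
      exact ⟨_, by rw [hsplit, mul_comm]⟩
    have hQval : Nat.card (↥Pe ⧸ K) = p ^ (np - k) := by
      have h1 : Nat.card (↥Pe ⧸ K) * p ^ k = p ^ (np - k) * p ^ k := by
        rw [← pow_add, Nat.sub_add_cancel hkn, ← hk, ← hsplit, hPcard]
      exact Nat.eq_of_mul_eq_mul_right (pow_pos hp.pos k) h1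
    have hfaceq : (Nat.card ↥C).factorization p + (C.index).factorization p = np := by
      have h1 : Nat.card ↥C * C.index = Nat.card G := Subgroup.card_mul_index C
      rw [hnp, ← h1, Nat.factorization_mul hc0 hi0]
      simp
    have hile : (C.index).factorization p ≤ np - k := by omega
    calc p ^ ((C.index).factorization p) ≤ p ^ (np - k) :=
          Nat.pow_le_pow_right hp.pos hile
      _ = Nat.card (↥Pe ⧸ K) := hQval.symm
      _ ≤ r := hQle
  -- Hence the index of C is at most r ^ r
  have hindex : C.index ≤ r ^ r := by
    have hfacself : (C.index).factorization.prod (· ^ ·) = C.index :=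
      Nat.factorization_prod_pow_eq_self hi0
    have hsupp : ∀ q ∈ (C.index).factorization.support, q ^ (C.index).factorization q ≤ r := by
      intro q hq
      exact key q (Nat.prime_of_mem_primeFactors (Nat.support_factorization _ ▸ hq))
    have hsubset : (C.index).factorization.support ⊆ Finset.Icc 2 r := by
      intro q hq
      have hqp : q.Prime := Nat.prime_of_mem_primeFactors (Nat.support_factorization _ ▸ hq)
      have hfz : (C.index).factorization q ≠ 0 := Finsupp.mem_support_iff.mp hq
      have hqler : q ≤ r :=
        le_trans (Nat.le_self_pow hfz q) (hsupp q hq)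
      exact Finset.mem_Icc.mpr ⟨hqp.two_le, hqler⟩
    have hcard : (C.index).factorization.support.card ≤ r := by
      refine le_trans (Finset.card_le_card hsubset) ?_
      rw [Nat.card_Icc]
      omega
    calc C.index = (C.index).factorization.prod (· ^ ·) := hfacself.symm
      _ = ∏ q ∈ (C.index).factorization.support, q ^ (C.index).factorization q := rfl
      _ ≤ ∏ _q ∈ (C.index).factorization.support, r := Finset.prod_le_prod' hsupp
      _ = r ^ (C.index).factorization.support.card := Finset.prod_const r
      _ ≤ r ^ r := Nat.pow_le_pow_right hr hcard
  -- G embeds into the permutations of G ⧸ C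
  set ρ := MulAction.toPermHom G (G ⧸ C) with hρ
  have hρinj : Function.Injective ρ := by
    rw [← MonoidHom.ker_eq_bot_iff, ← Subgroup.normalCore_eq_ker]
    rcases (Subgroup.normalCore_normal C).eq_bot_or_eq_top with h | h
    · exact h
    · exact absurd (top_le_iff.mp (h ▸ C.normalCore_le)) hCne
  have hGle : Nat.card G ≤ Nat.card (Equiv.Perm (G ⧸ C)) :=
    Nat.card_le_card_of_injective ρ hρinj
  have hperm : Nat.card (Equiv.Perm (G ⧸ C)) = (Nat.card (G ⧸ C)).factorial := by
    haveI : DecidableEq (G ⧸ C) := Classical.decEq _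
    haveI := Fintype.ofFinite (G ⧸ C)
    rw [Nat.card_eq_fintype_card, Nat.card_eq_fintype_card, Fintype.card_perm]
  have hqc : Nat.card (G ⧸ C) = C.index := rfl
  calc Nat.card G ≤ Nat.card (Equiv.Perm (G ⧸ C)) := hGle
    _ = (C.index).factorial := by rw [hperm, hqc]
    _ ≤ (r ^ r).factorial := Nat.factorial_le hindex
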